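/- Suppose (a, U, F) satisfies conditions (C) with a = 0, and set g := ((n−2)F)/((n−1)F'). Then the pair ξ(t,u) := t, η(t,u) := g(u) satisfies the symmetry condition (SC) at all (t,u,v) ∈ ℝ × U × ℝ. (That is, t∂_t + g(u)∂_u is an infinitesimal Lie point symmetry of ü = Σ_{k=0}^n f_k(u)u̇^k on U.) -/

import Mathlib

/-- Partial derivative in the first (time) variable. -/
noncomputable def pt (φ : ℝ → ℝ → ℝ) (t u : ℝ) : ℝ := deriv (fun s => φ s u) t

/-- Partial derivative in the second (space) variable. -/
noncomputable def pu (φ : ℝ → ℝ → ℝ) (t u : ℝ) : ℝ := deriv (fun x => φ t x) u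

/-- The expression `E(t,u,v)` from the symmetry condition. -/
noncomputable def symE (n : ℕ) (f : ℕ → ℝ → ℝ) (ξ η : ℝ → ℝ → ℝ) (t u v : ℝ) : ℝ :=
  (-(pt (pt η) t u) + deriv (f 0) u * η t u + f 1 u * pt η t u - f 0 u * pu η t u
      + 2 * f 0 u * pt ξ t u)
  + (pt (pt ξ) t u - 2 * pu (pt η) t u + deriv (f 1) u * η t u + 2 * f 2 u * pt η t u
      + f 1 u * pt ξ t u + 3 * f 0 u * pu ξ t u) * v
  + (2 * pu (pt ξ) t u - pu (pu η) t u + deriv (f 2) u * η t u + 3 * f 3 u * pt η t u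
      + f 2 u * pu η t u + 2 * f 1 u * pu ξ t u) * v ^ 2
  + (pu (pu ξ) t u + deriv (f 3) u * η t u + 4 * f 4 u * pt η t u + 2 * f 3 u * pu η t u
      - f 3 u * pt ξ t u + f 2 u * pu ξ t u) * v ^ 3
  + (∑ k ∈ Finset.Icc 4 (n - 1),
      (deriv (f k) u * η t u + ((k : ℝ) + 1) * f (k + 1) u * pt η t u
        + ((k : ℝ) - 1) * f k u * pu η t u + (2 - (k : ℝ)) * f k u * pt ξ t u
        + (4 - (k : ℝ)) * f (k - 1) u * pu ξ t u) * v ^ k)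
  + (deriv (f n) u * η t u + ((n : ℝ) - 1) * f n u * pu η t u
      + (2 - (n : ℝ)) * f n u * pt ξ t u + (4 - (n : ℝ)) * f (n - 1) u * pu ξ t u) * v ^ n
  + (3 - (n : ℝ)) * f n u * pu ξ t u * v ^ (n + 1)

/-- The symmetry condition (SC) on `ℝ × U × ℝ`. -/
def SC (n : ℕ) (f : ℕ → ℝ → ℝ) (ξ η : ℝ → ℝ → ℝ) (U : Set ℝ) : Prop :=
  ∀ t : ℝ, ∀ u ∈ U, ∀ v : ℝ, symE n f ξ η t u v = 0

/-- The function `g = ((n−2)F)/((n−1)F')`. -/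
noncomputable def gFun (n : ℕ) (F : ℝ → ℝ) (u : ℝ) : ℝ :=
  (((n : ℝ) - 2) * F u) / (((n : ℝ) - 1) * deriv F u)

/-- The system (E0)-(Ek) of equations on `U`. -/
def Esys (n : ℕ) (f : ℕ → ℝ → ℝ) (a : ℝ) (U : Set ℝ) (g : ℝ → ℝ) : Prop :=
  (∀ u ∈ U, -a ^ 2 * g u + deriv (f 0) u * g u + a * f 1 u * g u
      - f 0 u * deriv g u + 2 * f 0 u = 0) ∧
  (∀ u ∈ U, a * (1 - 2 * deriv g u) + deriv (f 1) u * g u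
      + 2 * a * f 2 u * g u + f 1 u = 0) ∧
  (∀ u ∈ U, -(deriv (deriv g) u) + deriv (f 2) u * g u
      + 3 * a * f 3 u * g u + f 2 u * deriv g u = 0) ∧
  (∀ k : ℕ, 3 ≤ k → k ≤ n - 1 → ∀ u ∈ U,
      deriv (f k) u * g u + ((k : ℝ) + 1) * a * f (k + 1) u * g u
        + ((k : ℝ) - 1) * f k u * deriv g u + (2 - (k : ℝ)) * f k u = 0)

/-- Conditions (C) for the triple `(a, U, F)`:  `F` is three-times differentiable on `U`,
`f n` and `F` do not vanish on `U`, `F' = |f n| ^ (1/(n-1))` on `U`, and the system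
(E0)-(Ek) holds on `U` with `g = ((n−2)F)/((n−1)F')`. -/
def CondC (n : ℕ) (f : ℕ → ℝ → ℝ) (a : ℝ) (U : Set ℝ) (F : ℝ → ℝ) : Prop :=
  (∀ u ∈ U, DifferentiableAt ℝ F u) ∧
  (∀ u ∈ U, DifferentiableAt ℝ (deriv F) u) ∧
  (∀ u ∈ U, DifferentiableAt ℝ (deriv (deriv F)) u) ∧
  (∀ u ∈ U, f n u ≠ 0) ∧
  (∀ u ∈ U, F u ≠ 0) ∧
  (∀ u ∈ U, deriv F u = |f n u| ^ ((1 : ℝ) / ((n : ℝ) - 1))) ∧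
  Esys n f a U (gFun n F)

/-- The reduced system (S) on `ℝ × U` for `ξ : ℝ → ℝ` and `η : ℝ → ℝ → ℝ`. -/
def SysS (n : ℕ) (f : ℕ → ℝ → ℝ) (ξ : ℝ → ℝ) (η : ℝ → ℝ → ℝ) (U : Set ℝ) : Prop :=
  (∀ t : ℝ, ∀ u ∈ U, -(pt (pt η) t u) + deriv (f 0) u * η t u + f 1 u * pt η t u
      - f 0 u * pu η t u + 2 * f 0 u * deriv ξ t = 0) ∧
  (∀ t : ℝ, ∀ u ∈ U, deriv (deriv ξ) t - 2 * pu (pt η) t u + deriv (f 1) u * η t u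
      + 2 * f 2 u * pt η t u + f 1 u * deriv ξ t = 0) ∧
  (∀ t : ℝ, ∀ u ∈ U, -(pu (pu η) t u) + deriv (f 2) u * η t u + 3 * f 3 u * pt η t u
      + f 2 u * pu η t u = 0) ∧
  (∀ k : ℕ, 3 ≤ k → k ≤ n - 1 → ∀ t : ℝ, ∀ u ∈ U,
      deriv (f k) u * η t u + ((k : ℝ) + 1) * f (k + 1) u * pt η t u
        + ((k : ℝ) - 1) * f k u * pu η t u + (2 - (k : ℝ)) * f k u * deriv ξ t = 0) ∧
  (∀ t : ℝ, ∀ u ∈ U, deriv (f n) u * η t u + ((n : ℝ) - 1) * f n u * pu η t u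
      + (2 - (n : ℝ)) * f n u * deriv ξ t = 0)

private lemma keyLem (n : ℕ) (hn : 4 ≤ n) (I : Set ℝ) (hI : IsOpen I)
    (f : ℕ → ℝ → ℝ) (hf : ∀ k ≤ n, ContDiffOn ℝ 2 (f k) I)
    (U : Set ℝ) (hUI : U ⊆ I) (hU : IsOpen U) (F : ℝ → ℝ)
    (hF2 : ∀ u ∈ U, DifferentiableAt ℝ (deriv F) u)
    (hfn : ∀ u ∈ U, f n u ≠ 0)
    (hFd : ∀ u ∈ U, deriv F u = |f n u| ^ ((1 : ℝ) / ((n : ℝ) - 1)))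
    (u : ℝ) (hu : u ∈ U) :
    deriv (f n) u * deriv F u = ((n : ℝ) - 1) * f n u * deriv (deriv F) u := by
  have hn1 : ((n : ℝ) - 1) ≠ 0 := by
    have : (4:ℝ) ≤ (n:ℝ) := by exact_mod_cast hn
    linarith
  have hcont : ContinuousAt (f n) u :=
    ((hf n le_rfl).continuousOn.continuousAt (hI.mem_nhds (hUI hu)))
  have hUn : U ∈ nhds u := hU.mem_nhds hu
  have hcastn : ((n - 1 : ℕ) : ℝ) = (n:ℝ) - 1 := by
    rw [Nat.cast_sub (by omega)]; norm_num
  have habs : ∀ x ∈ U, (deriv F x) ^ (n - 1) = |f n x| := by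
    intro x hx
    rw [hFd x hx, ← Real.rpow_natCast (|f n x| ^ ((1:ℝ)/((n:ℝ)-1))) (n-1),
      ← Real.rpow_mul (abs_nonneg _)]
    rw [hcastn, one_div, inv_mul_cancel₀ hn1, Real.rpow_one]
  have h1 : deriv (fun x => (deriv F x) ^ (n-1)) u
      = ((n:ℝ) - 1) * (deriv F u) ^ (n - 2) * deriv (deriv F) u := by
    have h : deriv (fun x => (deriv F x) ^ (n-1)) u = _ := ((hF2 u hu).hasDerivAt.pow (n-1)).deriv
    rw [h, hcastn, show n-1-1 = n-2 from by omega]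
  have hpow : (deriv F u) ^ (n - 2) * deriv F u = |f n u| := by
    rw [← pow_succ, show n - 2 + 1 = n - 1 by omega, habs u hu]
  rcases lt_or_gt_of_ne (hfn u hu) with hneg | hpos
  · have heq : (fun x => (deriv F x) ^ (n-1)) =ᶠ[nhds u] (fun x => -(f n x)) := by
      filter_upwards [hUn, hcont.eventually_lt_const hneg] with x hxU hx
      rw [habs x hxU, abs_of_neg hx]
    have hD := heq.deriv_eq
    rw [h1, deriv.fun_neg] at hD
    rw [abs_of_neg hneg] at hpow
    linear_combination deriv F u * hD - ((n:ℝ) - 1) * deriv (deriv F) u * hpow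
  · have heq : (fun x => (deriv F x) ^ (n-1)) =ᶠ[nhds u] (fun x => f n x) := by
      filter_upwards [hUn, hcont.eventually_const_lt hpos] with x hxU hx
      rw [habs x hxU, abs_of_pos hx]
    have hD := heq.deriv_eq
    rw [h1, show (fun x => f n x) = f n from rfl] at hD
    rw [abs_of_pos hpos] at hpow
    linear_combination -deriv F u * hD + ((n:ℝ) - 1) * deriv (deriv F) u * hpow

theorem stmt2 (n : ℕ) (hn : 4 ≤ n) (I : Set ℝ) (hI : IsOpen I) (hIc : I.OrdConnected)
    (f : ℕ → ℝ → ℝ) (hf : ∀ k ≤ n, ContDiffOn ℝ 2 (f k) I) (hfz : ∀ k, n < k → f k = 0)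
    (U : Set ℝ) (hUI : U ⊆ I) (hU : IsOpen U) (hUc : U.OrdConnected)
    (F : ℝ → ℝ) (hC : CondC n f 0 U F) :
    SC n f (fun t _ => t) (fun _ u => gFun n F u) U := by
  obtain ⟨hF1, hF2, hF3, hfn, hFne, hFd, hE0, hE1, hE2, hEk⟩ := hC
  intro t u hu v
  have hn1 : ((n : ℝ) - 1) ≠ 0 := by
    have : (4:ℝ) ≤ (n:ℝ) := by exact_mod_cast hn
    linarith
  have hD : deriv F u ≠ 0 := by
    rw [hFd u hu]
    exact (Real.rpow_pos_of_pos (abs_pos.mpr (hfn u hu)) _).ne'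
  have key := keyLem n hn I hI f hf U hUI hU F hF2 hfn hFd u hu
  -- derivative of g
  have hgd : HasDerivAt (gFun n F)
      (((((n:ℝ)-2) * deriv F u) * (((n:ℝ)-1) * deriv F u)
        - (((n:ℝ)-2) * F u) * (((n:ℝ)-1) * deriv (deriv F) u))
        / (((n:ℝ)-1) * deriv F u)^2) u := by
    have h1 : HasDerivAt (fun x => ((n:ℝ)-2) * F x) (((n:ℝ)-2) * deriv F u) u :=
      (hF1 u hu).hasDerivAt.const_mul _
    have h2 : HasDerivAt (fun x => ((n:ℝ)-1) * deriv F x) (((n:ℝ)-1) * deriv (deriv F) u) u :=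
      (hF2 u hu).hasDerivAt.const_mul _
    exact h1.div h2 (mul_ne_zero hn1 hD)
  have hgu : gFun n F u = (((n:ℝ)-2) * F u) / (((n:ℝ)-1) * deriv F u) := rfl
  -- the n-th equation
  have en : deriv (f n) u * gFun n F u
      + ((n:ℝ) - 1) * f n u * deriv (gFun n F) u + (2 - (n:ℝ)) * f n u = 0 := by
    rw [hgd.deriv, hgu]
    linear_combination (norm := skip) (((n:ℝ)-2) * F u / (((n:ℝ)-1) * deriv F u ^ 2)) * key
    field_simp
    ring
  -- now expand symE
  show symE n f (fun t _ => t) (fun _ u => gFun n F u) t u v = 0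
  simp only [symE, pt, pu]
  norm_num
  rw [show (fun x => gFun n F x) = gFun n F from rfl]
  rw [Finset.sum_eq_zero (fun k hk => ?_)]
  · have e0 := hE0 u hu
    have e1 := hE1 u hu
    have e2 := hE2 u hu
    have e3 := hEk 3 le_rfl (by omega) u hu
    linear_combination e0 + v * e1 + v^2 * e2 + v^3 * e3 + v^n * en
  · rw [Finset.mem_Icc] at hk
    have h := hEk k (by omega) hk.2 u hu
    linear_combination v^k * h
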